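/- For any election system E, if p witnesses successful destructive control via run-off partition of candidates with ties-promote (RPC-TP-NUW) on (C,V,p) by partition (C₁,C₂), then letting C' be the candidate set of the election in which p participated and lost (one of (C₁,V), (C₂,V), or the final round), the partition (C', C∖C') is a successful solution to destructive control by partition of candidates with ties-promote (PC-TP-NUW) on (C,V,p), since in the PC-TP process under this partition p participates in and loses the first-round election (C',V). -/
import Mathlib


/-- for any election system `E`, if the partition `(C₁,C₂)` is a
successful DC-RPC-TP-NUW solution on `(C,V,p)` and `C'` is the candidate set of
the election of the RPC-TP process in which `p` participated and lost (one of
`(C₁,V)`, `(C₂,V)`, or the final round on `E C₁ ∪ E C₂`), then `(C', C \ C')` is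
a successful DC-PC-TP-NUW solution: `p` participates in and loses the first-round
election `(C',V)` and hence is not a winner of the two-stage PC-TP process. -/
theorem rpc_tp_to_pc_tp_solution {α : Type*} [DecidableEq α]
    (E : Finset α → Finset α) (hE : ∀ C' : Finset α, E C' ⊆ C')
    (C C₁ C₂ C' : Finset α) (p : α) (hp : p ∈ C)
    (hcup : C₁ ∪ C₂ = C) (hdisj : C₁ ∩ C₂ = ∅)
    (hsucc : p ∉ E (E C₁ ∪ E C₂))
    (hC' : C' = C₁ ∨ C' = C₂ ∨ C' = E C₁ ∪ E C₂)
    (hpart : p ∈ C') (hlost : p ∉ E C') :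
    C' ⊆ C ∧ p ∉ E (E C' ∪ (C \ C')) := by
  have hsub : C' ⊆ C := by
    rcases hC' with h | h | h <;> subst h
    · exact hcup ▸ Finset.subset_union_left
    · exact hcup ▸ Finset.subset_union_right
    · exact fun x hx => hcup ▸ (Finset.union_subset_union (hE C₁) (hE C₂)) hx
  refine ⟨hsub, fun hmem => ?_⟩
  rcases Finset.mem_union.mp (hE _ hmem) with h | h
  · exact hlost h
  · exact (Finset.mem_sdiff.mp h).2 hpart
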